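/- Tian–Pearl lower bound on PN: for every P as in the context, P(Y₀ = false ∧ X = true ∧ Y = true) ≥ P(Y = true) − P(Y₀ = true); consequently, if P(X = true ∧ Y = true) > 0 then PN ≥ max {0, (P(Y = true) − P(Y₀ = true)) / P(X = true ∧ Y = true)}. -/
import Mathlib


/-- The probability of an event `E` under a mass function `P` on a finite type. -/
noncomputable def prob {Ω : Type*} [Fintype Ω] (P : Ω → ℝ) (E : Set Ω) : ℝ :=
  ∑ ω, E.indicator P ω

/-- The binary counterfactual sample space: coordinates `(Y₀, Y₁, X)`, i.e. the potential
outcomes `Y₀ = Y_{x'}` and `Y₁ = Y_x` and the treatment `X`. -/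
abbrev BOmega : Type := Bool × Bool × Bool

/-- The observed outcome defined by consistency: `Y := if X then Y₁ else Y₀`. -/
def Yobs (ω : BOmega) : Bool := if ω.2.2 then ω.2.1 else ω.1

/-- Tian–Pearl lower bound on PN: `P(y'_{x'}, x, y) ≥ P(y) − P(y_{x'})`; consequently,
if `P(x, y) > 0` then `PN ≥ max {0, (P(y) − P(y_{x'})) / P(x, y)}`. -/
theorem tian_pearl_pn_lower_bound
    (P : BOmega → ℝ) (hP0 : ∀ ω, 0 ≤ P ω) (hP1 : ∑ ω, P ω = 1) :
    (prob P {ω | Yobs ω = true} - prob P {ω | ω.1 = true} ≤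
      prob P {ω | ω.1 = false ∧ ω.2.2 = true ∧ Yobs ω = true}) ∧
    (0 < prob P {ω | ω.2.2 = true ∧ Yobs ω = true} →
      max 0 ((prob P {ω | Yobs ω = true} - prob P {ω | ω.1 = true}) /
          prob P {ω | ω.2.2 = true ∧ Yobs ω = true}) ≤
        prob P {ω | ω.1 = false ∧ ω.2.2 = true ∧ Yobs ω = true} /
          prob P {ω | ω.2.2 = true ∧ Yobs ω = true}) := by
  have hnn : ∀ E : Set BOmega, 0 ≤ prob P E := by
    intro E
    exact Finset.sum_nonneg fun ω _ => Set.indicator_nonneg (fun ω _ => hP0 ω) ω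
  have key : prob P {ω | Yobs ω = true} - prob P {ω | ω.1 = true} ≤
      prob P {ω | ω.1 = false ∧ ω.2.2 = true ∧ Yobs ω = true} := by
    simp only [prob, Set.indicator, Set.mem_setOf_eq, Fintype.sum_prod_type, Fintype.sum_bool,
      Yobs]
    norm_num
    have := hP0 (true, true, true); have := hP0 (true, false, false)
    have := hP0 (true, true, false); have := hP0 (true, false, true)
    linarith
  refine ⟨key, fun hpos => ?_⟩
  rw [max_le_iff]
  exact ⟨div_nonneg (hnn _) hpos.le, (div_le_div_iff_of_pos_right hpos).mpr key⟩
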